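/- Let R be a Dedekind domain, I an ideal of R, and M any R-module. Then every R-module homomorphism φ : I → M with φ(t) ∈ tM for all t ∈ I is of the form φ(t) = tm for a fixed m ∈ M. -/

import Mathlib

theorem principal_of_dedekind {R : Type*} [CommRing R] [IsDedekindDomain R]
    (I : Ideal R) (M : Type*) [AddCommGroup M] [Module R M]
    (φ : I →ₗ[R] M) (hφ : ∀ t : I, ∃ m : M, φ t = (t : R) • m) :
    ∃ m : M, ∀ t : I, φ t = (t : R) • m := by
  by_cases hI : I = ⊥
  · refine ⟨0, fun t => ?_⟩
    have ht : (t : R) = 0 := by simpa [hI, Ideal.mem_bot] using t.2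
    have ht0 : t = 0 := Subtype.ext ht
    rw [ht0, map_zero, smul_zero]
  · let K := FractionRing R
    have hinj : Function.Injective (algebraMap R K) := IsFractionRing.injective R K
    have hI' : (I : FractionalIdeal (nonZeroDivisors R) K) ≠ 0 := by
      simpa [FractionalIdeal.coeIdeal_eq_zero] using hI
    have hinv : (I : FractionalIdeal (nonZeroDivisors R) K) *
        (I : FractionalIdeal (nonZeroDivisors R) K)⁻¹ = 1 :=
      mul_inv_cancel₀ hI'
    have h1 : (1 : K) ∈ ((I : FractionalIdeal (nonZeroDivisors R) K) :
        Submodule R K) * (((I : FractionalIdeal (nonZeroDivisors R) K)⁻¹ :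
        FractionalIdeal (nonZeroDivisors R) K) : Submodule R K) := by
      rw [← FractionalIdeal.coe_mul, hinv, FractionalIdeal.mem_coe]
      exact (FractionalIdeal.mem_one_iff _).mpr ⟨1, map_one _⟩
    have key : ∃ c : R, algebraMap R K c = (1 : K) ∧
        ∃ m : M, ∀ t : I, φ ⟨c * t, I.mul_mem_left c t.2⟩ = (t : R) • m := by
      refine Submodule.mul_induction_on h1 ?_ ?_
      · intro x hx y hy
        rw [FractionalIdeal.mem_coe, FractionalIdeal.mem_coeIdeal] at hx
        obtain ⟨x₀, hx₀, rfl⟩ := hx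
        rw [FractionalIdeal.mem_coe] at hy
        have hy' : ∀ w ∈ (I : FractionalIdeal (nonZeroDivisors R) K), y * w ∈
            (1 : FractionalIdeal (nonZeroDivisors R) K) :=
          (FractionalIdeal.mem_inv_iff hI').mp hy
        -- c with alg c = alg x₀ * y
        obtain ⟨c, hc⟩ := FractionalIdeal.mem_one_iff _ |>.mp
          (hy' (algebraMap R K x₀) (FractionalIdeal.mem_coeIdeal_of_mem _ hx₀))
        refine ⟨c, by rw [hc]; ring, ?_⟩
        obtain ⟨m₀, hm₀⟩ := hφ ⟨x₀, hx₀⟩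
        refine ⟨c • m₀, fun t => ?_⟩
        obtain ⟨s, hs⟩ := FractionalIdeal.mem_one_iff _ |>.mp
          (hy' (algebraMap R K t) (FractionalIdeal.mem_coeIdeal_of_mem _ t.2))
        have hct : c * (t : R) = s * x₀ := by
          apply hinj
          rw [map_mul, map_mul, hc, hs]
          ring
        have heq : (⟨c * t, I.mul_mem_left c t.2⟩ : I) = s • ⟨x₀, hx₀⟩ := by
          apply Subtype.ext
          simpa using hct
        rw [heq, map_smul, hm₀, smul_comm]
        simp only [smul_smul]
        rw [show x₀ * s = (t : R) * c from by rw [mul_comm, ← hct, mul_comm]]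
      · rintro x y ⟨c₁, hc₁, m₁, hm₁⟩ ⟨c₂, hc₂, m₂, hm₂⟩
        refine ⟨c₁ + c₂, by rw [map_add, hc₁, hc₂], m₁ + m₂, fun t => ?_⟩
        have heq : (⟨(c₁ + c₂) * t, I.mul_mem_left _ t.2⟩ : I) =
            ⟨c₁ * t, I.mul_mem_left c₁ t.2⟩ + ⟨c₂ * t, I.mul_mem_left c₂ t.2⟩ := by
          apply Subtype.ext
          push_cast
          ring
        rw [heq, map_add, hm₁ t, hm₂ t, smul_add]
    obtain ⟨c, hc, m, hm⟩ := key
    have hc1 : c = 1 := hinj (by rw [hc, map_one])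
    refine ⟨m, fun t => ?_⟩
    have := hm t
    rwa [hc1, show (⟨1 * t, I.mul_mem_left 1 t.2⟩ : I) = t from Subtype.ext (one_mul _)] at this
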